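/- Let X, X', Z be random variables taking values in finite types with joint probability mass function p, and for each pair (x', z) let q(· | x', z) be a probability mass function on the value type of X such that q(X | X', Z) > 0 almost surely. Then H(X' | Z) − H(X | Z) + E[ ln( p(X' | X, Z) / q(X | X', Z) ) ] ≥ 0, where p(x'|x,z) denotes the conditional pmf of X' given (X,Z) derived from the joint law. (Second-law-like entropy bound for a single subsystem: the expectation term represents the dissipated heat divided by temperature under local detailed balance with backward kernel q.) -/

import Mathlib

open scoped BigOperators

section InfoDefs

variable {Ω : Type*} [Fintype Ω]

/-- Pushforward probability mass function: `P(X = a)` for the random variable `X`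
on the finite probability space `(Ω, μ)`. -/
def prob {α : Type*} [DecidableEq α] (μ : Ω → ℝ) (X : Ω → α) (a : α) : ℝ :=
  ∑ ω, if X ω = a then μ ω else 0

/-- Shannon entropy (natural logarithm) of the random variable `X` under `μ`. -/
noncomputable def ent {α : Type*} [Fintype α] [DecidableEq α] (μ : Ω → ℝ) (X : Ω → α) : ℝ :=
  ∑ a, Real.negMulLog (prob μ X a)

/-- Conditional Shannon entropy `H(X | Y)`. -/
noncomputable def condEnt {α β : Type*} [Fintype α] [DecidableEq α] [Fintype β] [DecidableEq β]
    (μ : Ω → ℝ) (X : Ω → α) (Y : Ω → β) : ℝ :=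
  ent μ (fun ω => (X ω, Y ω)) - ent μ Y

/-- Mutual information `I(X;Y)`. -/
noncomputable def mi {α β : Type*} [Fintype α] [DecidableEq α] [Fintype β] [DecidableEq β]
    (μ : Ω → ℝ) (X : Ω → α) (Y : Ω → β) : ℝ :=
  ent μ X + ent μ Y - ent μ (fun ω => (X ω, Y ω))

/-- Conditional mutual information `I(X;Y|Z)`. -/
noncomputable def cmi {α β γ : Type*} [Fintype α] [DecidableEq α] [Fintype β] [DecidableEq β]
    [Fintype γ] [DecidableEq γ] (μ : Ω → ℝ) (X : Ω → α) (Y : Ω → β) (Z : Ω → γ) : ℝ :=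
  ent μ (fun ω => (X ω, Z ω)) + ent μ (fun ω => (Y ω, Z ω))
    - ent μ (fun ω => (X ω, Y ω, Z ω)) - ent μ Z

/-- Conditional independence of `U` and `V` given `W`:
the joint law satisfies `P(U,V,W)·P(W) = P(U,W)·P(V,W)` pointwise. -/
def CondIndep {α β γ : Type*} [DecidableEq α] [DecidableEq β] [DecidableEq γ]
    (μ : Ω → ℝ) (U : Ω → α) (V : Ω → β) (W : Ω → γ) : Prop :=
  ∀ u v w, prob μ (fun ω => (U ω, V ω, W ω)) (u, v, w) * prob μ W w
    = prob μ (fun ω => (U ω, W ω)) (u, w) * prob μ (fun ω => (V ω, W ω)) (v, w)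

/-- The tuple `(A_0, …, A_{n-1})` of the first `n` members of a family of random
variables, viewed as a single random variable valued in a (dependent) product type. -/
def tup {α : ℕ → Type*} (A : (i : ℕ) → Ω → α i) (n : ℕ) : Ω → ((i : Fin n) → α i.1) :=
  fun ω i => A i.1 ω

/-- The restriction `(A_i)_{i ∈ s}` of a family of random variables to a finite index
set `s`, viewed as a single random variable (a one-point constant if `s = ∅`). -/
def restrict {α : ℕ → Type*} (A : (i : ℕ) → Ω → α i) (s : Finset ℕ) :
    Ω → ((i : s) → α i.1) :=
  fun ω i => A i.1 ω

end InfoDefs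


section Aux
variable {Ω : Type*} [Fintype Ω]

lemma prob_nonneg' {α : Type*} [DecidableEq α] (μ : Ω → ℝ) (h : ∀ ω, 0 ≤ μ ω)
    (X : Ω → α) (a : α) : 0 ≤ prob μ X a :=
  Finset.sum_nonneg fun ω _ => by split_ifs; exacts [h ω, le_rfl]

lemma le_prob' {α : Type*} [DecidableEq α] (μ : Ω → ℝ) (h : ∀ ω, 0 ≤ μ ω)
    (X : Ω → α) (ω : Ω) : μ ω ≤ prob μ X (X ω) := by
  have := Finset.single_le_sum (f := fun ω' => if X ω' = X ω then μ ω' else 0)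
    (fun i _ => by split_ifs; exacts [h i, le_rfl]) (Finset.mem_univ ω)
  simpa [prob] using this

lemma push' {α : Type*} [Fintype α] [DecidableEq α] (μ : Ω → ℝ) (X : Ω → α) (f : α → ℝ) :
    ∑ ω, μ ω * f (X ω) = ∑ a, prob μ X a * f a := by
  simp only [prob, Finset.sum_mul, ite_mul, zero_mul]
  rw [Finset.sum_comm]
  refine Finset.sum_congr rfl fun ω _ => ?_
  simp

lemma sum_prob' {α : Type*} [Fintype α] [DecidableEq α] (μ : Ω → ℝ) (X : Ω → α) :
    ∑ a, prob μ X a = ∑ ω, μ ω := by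
  simp only [prob]
  rw [Finset.sum_comm]
  simp

lemma ent_eq' {α : Type*} [Fintype α] [DecidableEq α] (μ : Ω → ℝ) (X : Ω → α) :
    ent μ X = -∑ ω, μ ω * Real.log (prob μ X (X ω)) := by
  rw [ent, push' μ X (fun a => Real.log (prob μ X a))]
  simp [Real.negMulLog]

end Aux

/-- Second-law-like entropy bound for a single subsystem:
`H(X'|Z) − H(X|Z) + E[ln(p(X'|X,Z)/q(X|X',Z))] ≥ 0`
for any backward probability kernel `q` with `q(X|X',Z) > 0` almost surely. -/
theorem statement11 {Ω : Type*} [Fintype Ω] (μ : Ω → ℝ)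
    (hμ0 : ∀ ω, 0 ≤ μ ω) (hμ1 : ∑ ω, μ ω = 1)
    {α β γ : Type*} [Fintype α] [DecidableEq α] [Fintype β] [DecidableEq β]
    [Fintype γ] [DecidableEq γ]
    (X : Ω → α) (X' : Ω → β) (Z : Ω → γ)
    (q : α → β → γ → ℝ) (hq0 : ∀ x x' z, 0 ≤ q x x' z)
    (hq1 : ∀ x' z, ∑ x, q x x' z = 1)
    (hqas : ∀ ω, 0 < μ ω → 0 < q (X ω) (X' ω) (Z ω)) :
    condEnt μ X' Z - condEnt μ X Z
      + ∑ ω, μ ω *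
          Real.log ((prob μ (fun ω' => (X ω', X' ω', Z ω')) (X ω, X' ω, Z ω)
              / prob μ (fun ω' => (X ω', Z ω')) (X ω, Z ω))
            / q (X ω) (X' ω) (Z ω)) ≥ 0 := by
  classical
  set W : Ω → α × β × γ := fun ω => (X ω, X' ω, Z ω) with hW
  set p3 : α × β × γ → ℝ := prob μ W with hp3
  set p2 : α × γ → ℝ := prob μ (fun ω => (X ω, Z ω)) with hp2
  set p2' : β × γ → ℝ := prob μ (fun ω => (X' ω, Z ω)) with hp2'
  set r : α × β × γ → ℝ := fun v => p2' v.2 * q v.1 v.2.1 v.2.2 with hr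
  have key : condEnt μ X' Z - condEnt μ X Z
      + ∑ ω, μ ω * Real.log ((p3 (W ω) / p2 (X ω, Z ω)) / q (X ω) (X' ω) (Z ω))
      = ∑ ω, μ ω * Real.log (p3 (W ω) / r (W ω)) := by
    rw [condEnt, condEnt, ent_eq' μ (fun ω => (X' ω, Z ω)), ent_eq' μ (fun ω => (X ω, Z ω))]
    rw [← hp2, ← hp2']
    have : ∀ s : ℝ, (-(∑ ω, μ ω * Real.log (p2' (X' ω, Z ω))) - s)
        - ((-(∑ ω, μ ω * Real.log (p2 (X ω, Z ω)))) - s)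
        + ∑ ω, μ ω * Real.log ((p3 (W ω) / p2 (X ω, Z ω)) / q (X ω) (X' ω) (Z ω))
        = ∑ ω, (μ ω * Real.log (p2 (X ω, Z ω)) - μ ω * Real.log (p2' (X' ω, Z ω))
            + μ ω * Real.log ((p3 (W ω) / p2 (X ω, Z ω)) / q (X ω) (X' ω) (Z ω))) := by
      intro s
      rw [Finset.sum_add_distrib, Finset.sum_sub_distrib]
      ring
    rw [this]
    refine Finset.sum_congr rfl fun ω _ => ?_
    rcases eq_or_lt_of_le (hμ0 ω) with h0 | hpos
    · simp [← h0]
    · have h3 : 0 < p3 (W ω) := lt_of_lt_of_le hpos (le_prob' μ hμ0 W ω)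
      have h2 : 0 < p2 (X ω, Z ω) := lt_of_lt_of_le hpos (le_prob' μ hμ0 (fun ω => (X ω, Z ω)) ω)
      have h2' : 0 < p2' (X' ω, Z ω) :=
        lt_of_lt_of_le hpos (le_prob' μ hμ0 (fun ω => (X' ω, Z ω)) ω)
      have hq : 0 < q (X ω) (X' ω) (Z ω) := hqas ω hpos
      have hrw : r (W ω) = p2' (X' ω, Z ω) * q (X ω) (X' ω) (Z ω) := rfl
      rw [hrw]
      rw [Real.log_div (by positivity) hq.ne', Real.log_div h3.ne' h2.ne',
        Real.log_div h3.ne' (by positivity), Real.log_mul h2'.ne' hq.ne']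
      ring
  have goal_eq : condEnt μ X' Z - condEnt μ X Z
      + ∑ ω, μ ω *
          Real.log ((prob μ (fun ω' => (X ω', X' ω', Z ω')) (X ω, X' ω, Z ω)
              / prob μ (fun ω' => (X ω', Z ω')) (X ω, Z ω))
            / q (X ω) (X' ω) (Z ω))
      = ∑ v, p3 v * Real.log (p3 v / r v) := by
    rw [show (∑ ω, μ ω *
          Real.log ((prob μ (fun ω' => (X ω', X' ω', Z ω')) (X ω, X' ω, Z ω)
              / prob μ (fun ω' => (X ω', Z ω')) (X ω, Z ω))
            / q (X ω) (X' ω) (Z ω)))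
        = ∑ ω, μ ω * Real.log ((p3 (W ω) / p2 (X ω, Z ω)) / q (X ω) (X' ω) (Z ω)) from rfl]
    rw [key, push' μ W (fun v => Real.log (p3 v / r v))]
  rw [goal_eq]
  have hsum3 : ∑ v, p3 v = 1 := by rw [hp3, sum_prob', hμ1]
  have hsumr : ∑ v, r v = 1 := by
    have h1 : ∑ v : α × β × γ, r v = ∑ w : β × γ, p2' w := by
      rw [Fintype.sum_prod_type]
      rw [Finset.sum_comm]
      refine Finset.sum_congr rfl fun w _ => ?_
      have : ∀ x, r (x, w) = p2' w * q x w.1 w.2 := fun x => rfl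
      simp only [this]
      rw [← Finset.mul_sum, hq1 w.1 w.2, mul_one]
    rw [h1, hp2', sum_prob', hμ1]
  have hterm : ∀ v : α × β × γ, p3 v - r v ≤ p3 v * Real.log (p3 v / r v) := by
    intro v
    have hr0 : 0 ≤ r v := mul_nonneg (prob_nonneg' μ hμ0 _ _) (hq0 _ _ _)
    rcases eq_or_lt_of_le (show (0:ℝ) ≤ p3 v from prob_nonneg' μ hμ0 W v) with h0 | hpos
    · rw [← h0]
      simp [hr0]
    · have : ∃ ω, 0 < (if W ω = v then μ ω else 0) := by
        have h := Finset.exists_lt_of_sum_lt (f := fun _ : Ω => (0:ℝ))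
          (g := fun ω => if W ω = v then μ ω else 0) (by simpa [prob, hp3] using hpos)
        obtain ⟨i, hi⟩ := h
        exact ⟨i, hi.2⟩
      obtain ⟨ω, hω⟩ := this
      by_cases hWv : W ω = v
      · rw [if_pos hWv] at hω
        have hv1 : v.1 = X ω := by rw [← hWv]
        have hv21 : v.2.1 = X' ω := by rw [← hWv]
        have hv22 : v.2.2 = Z ω := by rw [← hWv]
        have hv2 : v.2 = (X' ω, Z ω) := by rw [← hWv]
        have hqv : 0 < q v.1 v.2.1 v.2.2 := by
          rw [hv1, hv21, hv22]; exact hqas ω hω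
        have hp2v : 0 < p2' v.2 := by
          rw [hv2]; exact lt_of_lt_of_le hω (le_prob' μ hμ0 (fun ω => (X' ω, Z ω)) ω)
        have hrpos : 0 < r v := mul_pos hp2v hqv
        have hlog := Real.log_le_sub_one_of_pos (show 0 < r v / p3 v from div_pos hrpos hpos)
        have hneg : 1 - r v / p3 v ≤ Real.log (p3 v / r v) := by
          rw [show p3 v / r v = (r v / p3 v)⁻¹ from (inv_div _ _).symm, Real.log_inv]
          linarith
        have := mul_le_mul_of_nonneg_left hneg hpos.le
        calc p3 v - r v = p3 v * (1 - r v / p3 v) := by field_simp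
          _ ≤ p3 v * Real.log (p3 v / r v) := this
      · rw [if_neg hWv] at hω; exact absurd hω (lt_irrefl 0)
  have : ∑ v, (p3 v - r v) ≤ ∑ v, p3 v * Real.log (p3 v / r v) :=
    Finset.sum_le_sum fun v _ => hterm v
  rw [Finset.sum_sub_distrib, hsum3, hsumr] at this
  linarith
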